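/- Let X be a continuum without cut-points and S_1 ⊆ … ⊆ S_k an increasing sequence of closed subsets of X with S_k ≠ ∅. Then J(X,S⃗) − {x*} has infinitely many connected components, while for every point z ∈ J(X,S⃗) with z ≠ x*, the space J(X,S⃗) − {z} has at most two connected components. In particular, x* is the unique point of J(X,S⃗) whose removal leaves infinitely many connected components. -/

import Mathlib

open Topology

/-- The set of isolated points of the subspace `S` (computed in the ambient space `W`). -/
def isoPts {W : Type*} [TopologicalSpace W] (S : Set W) : Set W :=
  {p | p ∈ S ∧ 𝓝[S \ {p}] p = ⊥}

/-- The canonical embedding of `X` into the ambient space `X × ℝ^ℕ`. -/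
def embW {X : Type*} (x : X) : X × (ℕ → ℝ) := (x, fun _ => 0)

/-- The canonical copy of `X` inside `X × ℝ^ℕ`. -/
def baseW (X : Type*) : Set (X × (ℕ → ℝ)) := {w | w.2 = fun _ => 0}

/-- Place the value `t` in coordinate `j`. -/
def addC {X : Type*} (j : ℕ) (t : ℝ) (w : X × (ℕ → ℝ)) : X × (ℕ → ℝ) :=
  (w.1, Function.update w.2 j t)

/-- `Z'` is a copy of `I(Z, B; D)` for some admissible `D`, realized using coordinate `j`:
`Z' = Z ∪ D` where `D` is a nonempty set of points `addC j t z` (`z ∈ Z`, `t ∈ (0,1]`),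
each of which is isolated in `Z'`, with `cl(D) − D = B`; by convention `D` is a single point
when `B = ∅`. -/
def IsIStep {X : Type*} [TopologicalSpace X] (j : ℕ)
    (Z B Z' : Set (X × (ℕ → ℝ))) : Prop :=
  ∃ D : Set (X × (ℕ → ℝ)),
    Z' = Z ∪ D ∧ D.Nonempty ∧
    (∀ p ∈ D, ∃ z ∈ Z, ∃ t ∈ Set.Ioc (0 : ℝ) 1, p = addC j t z) ∧
    (∀ p ∈ D, 𝓝[Z' \ {p}] p = ⊥) ∧
    closure D \ D = B ∧
    (B = ∅ → D.Subsingleton)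

/-- The iterated construction: `IsITowerFrom j Z As Z'` says that `Z'` is obtained from `Z`
by successively applying the `I(·, D_k ∪ A_{k+1})` construction along the list `As`,
where `D_k` is the current set of isolated points. -/
def IsITowerFrom {X : Type*} [TopologicalSpace X] :
    ℕ → Set (X × (ℕ → ℝ)) → List (Set X) → Set (X × (ℕ → ℝ)) → Prop
  | _, Z, [], Z' => Z' = Z
  | j, Z, A :: rest, Z' =>
      ∃ Zm, IsIStep j Z (isoPts Z ∪ (embW '' A)) Zm ∧ IsITowerFrom (j + 1) Zm rest Z'

/-- `Z` is a model of `I_n(X, A_1, …, A_n)` where `As = [A_1, …, A_n]`. -/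
def IsIModel {X : Type*} [TopologicalSpace X] (As : List (Set X))
    (Z : Set (X × (ℕ → ℝ))) : Prop :=
  IsITowerFrom 0 (baseW X) As Z


/-- The underlying set of `F(Z,B)`: the subspace `Z×{0} ∪ B×[0,1]` of `Z × [0,1]`. -/
abbrev FPts (Z : Type*) (B : Set Z) := {p : Z × unitInterval // p.2 = 0 ∨ p.1 ∈ B}

/-- The relation identifying all points of `B × {1}` to one point. -/
def FRel {Z : Type*} {B : Set Z} (p q : FPts Z B) : Prop :=
  p = q ∨ (p.val.2 = 1 ∧ q.val.2 = 1)

/-- The space `F(Z,B)`: the quotient of `Z×{0} ∪ B×[0,1]` collapsing `B × {1}` to a point. -/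
abbrev FSp (Z : Type*) [TopologicalSpace Z] (B : Set Z) := Quot (@FRel Z B)

/-- The closure of the set `D_X` of added points, viewed inside the subspace `Z`. -/
def JB {X : Type*} [TopologicalSpace X] (Z : Set (X × (ℕ → ℝ))) : Set ↥Z :=
  {z | (z : X × (ℕ → ℝ)) ∈ closure (Z \ baseW X)}

/-- The space `J(X, S⃗) = F(I(X,S⃗), cl(D_X))`, for `Z` a model of `I(X,S⃗)`. -/
abbrev JSp {X : Type*} [TopologicalSpace X] (Z : Set (X × (ℕ → ℝ))) :=
  FSp (↥Z) (JB Z)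

/-- The point of `J(X,S⃗)` determined by a representative. -/
def JPt {X : Type*} [TopologicalSpace X] (Z : Set (X × (ℕ → ℝ)))
    (p : FPts (↥Z) (JB Z)) : JSp Z := Quot.mk FRel p

namespace Stmt15Aux

lemma frel_equivalence {Z : Type*} {B : Set Z} : Equivalence (@FRel Z B) := by
  constructor
  · intro p; exact Or.inl rfl
  · intro p q h
    rcases h with h | h
    · exact Or.inl h.symm
    · exact Or.inr ⟨h.2, h.1⟩
  · intro p q r h1 h2
    rcases h1 with h1 | h1
    · rcases h2 with h2 | h2
      · exact Or.inl (h1.trans h2)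
      · exact Or.inr ⟨h1 ▸ h2.1, h2.2⟩
    · rcases h2 with h2 | h2
      · exact Or.inr ⟨h1.1, h2 ▸ h1.2⟩
      · exact Or.inr ⟨h1.1, h2.2⟩

variable {X : Type} [MetricSpace X] {Z : Set (X × (ℕ → ℝ))}

lemma jpt_eq_iff (p p' : FPts (↥Z) (JB Z)) :
    JPt Z p = JPt Z p' ↔ (p = p' ∨ (p.val.2 = 1 ∧ p'.val.2 = 1)) := by
  unfold JPt
  rw [Quot.eq, Equivalence.eqvGen_iff frel_equivalence]
  exact Iff.rfl

lemma tower_subset :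
    ∀ (L : List (Set X)) (j : ℕ) (Z0 Z' : Set (X × (ℕ → ℝ))),
      IsITowerFrom j Z0 L Z' → Z0 ⊆ Z' := by
  intro L
  induction L with
  | nil => intro j Z0 Z' h; exact h ▸ le_refl _
  | cons A rest ih =>
    intro j Z0 Z' h
    obtain ⟨Zm, ⟨D, hZm, -⟩, ht⟩ := h
    exact (hZm ▸ Set.subset_union_left).trans (ih _ Zm Z' ht)

lemma tower_concat :
    ∀ (L : List (Set X)) (A : Set X) (j : ℕ) (Z0 Z' : Set (X × (ℕ → ℝ))),
      IsITowerFrom j Z0 (L ++ [A]) Z' →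
      ∃ Zp jj, IsIStep jj Zp (isoPts Zp ∪ embW '' A) Z' := by
  intro L
  induction L with
  | nil =>
    intro A j Z0 Z' h
    obtain ⟨Zm, hs, ht⟩ := h
    have : Z' = Zm := ht
    exact ⟨Z0, j, this ▸ hs⟩
  | cons A' rest ih =>
    intro A j Z0 Z' h
    obtain ⟨Zm, _, ht⟩ := h
    exact ih A (j + 1) Zm Z' ht

lemma embW_mem_base (x : X) : embW x ∈ baseW X := rfl

lemma embW_injective : Function.Injective (embW : X → X × (ℕ → ℝ)) :=
  fun a b h => congrArg Prod.fst h

lemma addC_not_base {j : ℕ} {t : ℝ} (ht : 0 < t) (z : X × (ℕ → ℝ)) :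
    addC j t z ∉ baseW X := by
  intro h
  have : (addC j t z).2 j = 0 := by rw [show (addC j t z).2 = fun _ => 0 from h]
  simp [addC, Function.update_self] at this
  exact ht.ne' this

end Stmt15Aux

namespace Stmt15Aux

set_option linter.unusedSectionVars false

variable {X : Type} [MetricSpace X] {Z : Set (X × (ℕ → ℝ))}

/-- The whisker map over a point `w ∈ cl(D)`, parametrized by a real (clamped to `[0,1]`). -/
noncomputable def wmap (Z : Set (X × (ℕ → ℝ))) (w : ↥Z) (hw : w ∈ JB Z) (s : ℝ) : JSp Z :=
  JPt Z ⟨(w, Set.projIcc 0 1 zero_le_one s), Or.inr hw⟩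

lemma continuous_wmap (w : ↥Z) (hw : w ∈ JB Z) : Continuous (wmap Z w hw) := by
  apply Continuous.comp continuous_quot_mk
  exact Continuous.subtype_mk (continuous_const.prodMk continuous_projIcc) _

lemma wmap_of_mem (w : ↥Z) (hw : w ∈ JB Z) {s : ℝ} (hs : s ∈ Set.Icc (0:ℝ) 1) :
    wmap Z w hw s = JPt Z ⟨(w, ⟨s, hs⟩), Or.inr hw⟩ := by
  unfold wmap
  exact congrArg (JPt Z) (Subtype.ext (congrArg (Prod.mk w) (Set.projIcc_of_mem zero_le_one hs)))

/-- Membership of `⟦(w,s)⟧` in a whisker image. -/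
lemma mem_wmap_image (w : ↥Z) (hw : w ∈ JB Z) {J : Set ℝ} (hJ : J ⊆ Set.Icc (0:ℝ) 1)
    {s : unitInterval} (hs : (s : ℝ) ∈ J) (hp : (s = 0 ∨ w ∈ JB Z)) :
    JPt Z ⟨(w, s), hp⟩ ∈ wmap Z w hw '' J := by
  refine ⟨(s : ℝ), hs, ?_⟩
  rw [wmap_of_mem w hw (hJ hs)]

lemma wmap_image_preconn (w : ↥Z) (hw : w ∈ JB Z) {J : Set ℝ} (hJ : IsPreconnected J) :
    IsPreconnected (wmap Z w hw '' J) :=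
  hJ.image _ (continuous_wmap w hw).continuousOn

/-- The apex point. -/
def apexPt (Z : Set (X × (ℕ → ℝ))) (w : ↥Z) (hw : w ∈ JB Z) : JSp Z :=
  JPt Z ⟨(w, 1), Or.inr hw⟩

lemma apexPt_indep (w w' : ↥Z) (hw : w ∈ JB Z) (hw' : w' ∈ JB Z) :
    apexPt Z w hw = apexPt Z w' hw' :=
  Quot.sound (Or.inr ⟨rfl, rfl⟩)

lemma apexPt_mem_wmap (w w' : ↥Z) (hw : w ∈ JB Z) (hw' : w' ∈ JB Z)
    {J : Set ℝ} (h1 : (1:ℝ) ∈ J) : apexPt Z w' hw' ∈ wmap Z w hw '' J := by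
  refine ⟨1, h1, ?_⟩
  rw [wmap_of_mem w hw (by norm_num : (1:ℝ) ∈ Set.Icc (0:ℝ) 1)]
  refine Eq.trans ?_ (apexPt_indep w w' hw hw')
  rfl

/-- If a whisker point equals `JPt p` with `p` not of height 1, extract equalities. -/
lemma wmap_eq_jpt (w : ↥Z) (hw : w ∈ JB Z) {s : ℝ} (hs : s ∈ Set.Icc (0:ℝ) 1)
    {p : FPts (↥Z) (JB Z)} (hp1 : p.val.2 ≠ 1) (h : wmap Z w hw s = JPt Z p) :
    w = p.val.1 ∧ s = (p.val.2 : ℝ) := by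
  rw [wmap_of_mem w hw hs] at h
  rcases (jpt_eq_iff _ _).1 h with h | h
  · have hv := congrArg Subtype.val h
    exact ⟨congrArg Prod.fst hv, congrArg (fun q => (q.2 : ℝ)) hv⟩
  · exact absurd h.2 hp1

/-- The base map. -/
def bmap (Z : Set (X × (ℕ → ℝ))) (hb : baseW X ⊆ Z) (x : X) : JSp Z :=
  JPt Z ⟨(⟨embW x, hb (embW_mem_base x)⟩, 0), Or.inl rfl⟩

lemma continuous_bmap (hb : baseW X ⊆ Z) : Continuous (bmap Z hb) := by
  apply Continuous.comp continuous_quot_mk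
  refine Continuous.subtype_mk ?_ _
  refine Continuous.prodMk ?_ continuous_const
  exact Continuous.subtype_mk (continuous_id.prodMk continuous_const) _

lemma bmap_eq_jpt (hb : baseW X ⊆ Z) {x : X}
    {p : FPts (↥Z) (JB Z)} (hp1 : p.val.2 ≠ 1) (h : bmap Z hb x = JPt Z p) :
    (p.val.1 : X × (ℕ → ℝ)) = embW x ∧ (p.val.2 : ℝ) = 0 := by
  rcases (jpt_eq_iff _ _).1 h with h | h
  · have hv := congrArg Subtype.val h
    refine ⟨?_, ?_⟩
    · have := congrArg (fun q => (q.1 : X × (ℕ → ℝ))) hv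
      exact this.symm
    · have := congrArg (fun q => (q.2 : ℝ)) hv
      exact this.symm
  · refine absurd h.1 (fun hh => ?_)
    have : (0 : ℝ) = 1 := congrArg Subtype.val hh
    exact zero_ne_one this

end Stmt15Aux

namespace Stmt15Aux

set_option linter.unusedSectionVars false

lemma two_components {α : Type*} [TopologicalSpace α] {q : α} {A B : Set α}
    (hA : IsPreconnected A) (hB : IsPreconnected B)
    (hAq : A ⊆ {q}ᶜ) (hBq : B ⊆ {q}ᶜ) (hcov : ({q}ᶜ : Set α) ⊆ A ∪ B) :
    ∃ C1 C2 : Set α, ∀ x ∈ ({q}ᶜ : Set α),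
      connectedComponentIn ({q}ᶜ : Set α) x = C1 ∨
      connectedComponentIn ({q}ᶜ : Set α) x = C2 := by
  classical
  have key : ∀ (s : Set α), IsPreconnected s → s ⊆ {q}ᶜ → ∀ c ∈ s, ∀ x ∈ s,
      connectedComponentIn ({q}ᶜ : Set α) x = connectedComponentIn ({q}ᶜ : Set α) c := by
    intro s hs hsq c hc x hx
    exact connectedComponentIn_eq (hs.subset_connectedComponentIn hx hsq hc)
  rcases A.eq_empty_or_nonempty with hA0 | ⟨a, ha⟩
  · rcases B.eq_empty_or_nonempty with hB0 | ⟨b, hb⟩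
    · refine ⟨∅, ∅, fun x hx => absurd (hcov hx) ?_⟩
      simp [hA0, hB0]
    · refine ⟨connectedComponentIn ({q}ᶜ) b, connectedComponentIn ({q}ᶜ) b, fun x hx => ?_⟩
      rcases hcov hx with h | h
      · exact absurd h (by simp [hA0])
      · exact Or.inl (key B hB hBq b hb x h)
  · rcases B.eq_empty_or_nonempty with hB0 | ⟨b, hb⟩
    · refine ⟨connectedComponentIn ({q}ᶜ) a, connectedComponentIn ({q}ᶜ) a, fun x hx => ?_⟩
      rcases hcov hx with h | h
      · exact Or.inl (key A hA hAq a ha x h)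
      · exact absurd h (by simp [hB0])
    · refine ⟨connectedComponentIn ({q}ᶜ) a, connectedComponentIn ({q}ᶜ) b, fun x hx => ?_⟩
      exact (hcov hx).imp (key A hA hAq a ha x) (key B hB hBq b hb x)

variable {X : Type} [MetricSpace X] {Z : Set (X × (ℕ → ℝ))}

lemma unit_zero_ne_one : (0 : unitInterval) ≠ 1 := by
  intro h
  exact zero_ne_one (α := ℝ) (congrArg Subtype.val h)

lemma isolated_open {d : X × (ℕ → ℝ)} (hd : 𝓝[Z \ {d}] d = ⊥) :
    IsOpen {u : ↥Z | (u : X × (ℕ → ℝ)) = d} := by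
  have hbot : (∅ : Set (X × (ℕ → ℝ))) ∈ 𝓝[Z \ {d}] d := by
    rw [hd]; exact Filter.mem_bot
  obtain ⟨U, hUo, hdU, hsub⟩ := mem_nhdsWithin.1 hbot
  have : {u : ↥Z | (u : X × (ℕ → ℝ)) = d} = Subtype.val ⁻¹' U := by
    ext u
    constructor
    · intro h; rw [Set.mem_preimage, h]; exact hdU
    · intro h
      by_contra hne
      exact hsub ⟨h, u.2, hne⟩
  rw [this]
  exact hUo.preimage continuous_subtype_val

lemma part1 {D : Set (X × (ℕ → ℝ))} (hDZ : D ⊆ Z)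
    (hDiso : ∀ p ∈ D, 𝓝[Z \ {p}] p = ⊥) (hDinf : D.Infinite)
    (q : JSp Z) (hq : ∃ p : FPts (↥Z) (JB Z), JPt Z p = q ∧ p.val.2 = 1) :
    Set.Infinite (connectedComponentIn ({q}ᶜ : Set (JSp Z)) '' ({q}ᶜ : Set (JSp Z))) := by
  classical
  obtain ⟨p₁, hp₁, hp₁2⟩ := hq
  set f : (X × (ℕ → ℝ)) → Set (JSp Z) := fun d =>
    if h : d ∈ Z then connectedComponentIn ({q}ᶜ) (JPt Z ⟨(⟨d, h⟩, 0), Or.inl rfl⟩)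
    else ∅ with hf
  have hq_of_one : ∀ p : FPts (↥Z) (JB Z), p.val.2 = 1 → JPt Z p = q := by
    intro p h
    rw [← hp₁]
    exact Quot.sound (Or.inr ⟨h, hp₁2⟩)
  have main : ∀ d (hd : d ∈ D),
      (JPt Z ⟨(⟨d, hDZ hd⟩, 0), Or.inl rfl⟩ ∈ ({q}ᶜ : Set (JSp Z))) ∧
      connectedComponentIn ({q}ᶜ) (JPt Z ⟨(⟨d, hDZ hd⟩, 0), Or.inl rfl⟩) ⊆
        {y : JSp Z | ∃ p : FPts (↥Z) (JB Z),
          JPt Z p = y ∧ ((p.val.1 : X × (ℕ → ℝ)) = d ∧ p.val.2 ≠ 1)} := by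
    intro d hd
    set Wd : Set (JSp Z) := {y | ∃ p : FPts (↥Z) (JB Z),
      JPt Z p = y ∧ ((p.val.1 : X × (ℕ → ℝ)) = d ∧ p.val.2 ≠ 1)} with hWd
    have hpre : Quot.mk FRel ⁻¹' Wd =
        {p : FPts (↥Z) (JB Z) | (p.val.1 : X × (ℕ → ℝ)) = d ∧ p.val.2 ≠ 1} := by
      ext p
      constructor
      · rintro ⟨p', hp', hcond⟩
        rcases (jpt_eq_iff p' p).1 hp' with h | h
        · exact h ▸ hcond
        · exact absurd h.1 hcond.2
      · intro h
        exact ⟨p, rfl, h⟩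
    have hptd_mem : JPt Z ⟨(⟨d, hDZ hd⟩, 0), Or.inl rfl⟩ ∈ Wd :=
      ⟨⟨(⟨d, hDZ hd⟩, 0), Or.inl rfl⟩, rfl, rfl, unit_zero_ne_one⟩
    have hne : JPt Z ⟨(⟨d, hDZ hd⟩, 0), Or.inl rfl⟩ ∈ ({q}ᶜ : Set (JSp Z)) := by
      intro h
      rw [← hp₁] at h
      rcases (jpt_eq_iff _ _).1 h with h | h
      · have h0 : (0 : unitInterval) = p₁.val.2 :=
          congrArg (fun r : FPts (↥Z) (JB Z) => r.val.2) h
        exact unit_zero_ne_one (h0.trans hp₁2)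
      · exact unit_zero_ne_one h.1
    have hopen : IsOpen Wd := by
      rw [← isQuotientMap_quot_mk.isOpen_preimage, hpre]
      have heq : {p : FPts (↥Z) (JB Z) | (p.val.1 : X × (ℕ → ℝ)) = d ∧ p.val.2 ≠ 1}
          = Subtype.val ⁻¹'
            ({u : ↥Z | (u : X × (ℕ → ℝ)) = d} ×ˢ {s : unitInterval | s ≠ 1}) := by
        ext p
        simp [Set.mem_prod]
      rw [heq]
      exact ((isolated_open (hDiso d hd)).prod isOpen_ne).preimage continuous_subtype_val
    have hpre2 : Quot.mk FRel ⁻¹' (Wd ∪ {q}) =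
        ((fun p : FPts (↥Z) (JB Z) => ((p.val.1 : ↥Z) : X × (ℕ → ℝ))) ⁻¹' {d}) ∪
        ((fun p : FPts (↥Z) (JB Z) => p.val.2) ⁻¹' {1}) := by
      ext p
      constructor
      · rintro (⟨p', hp', h1, h2⟩ | hqq)
        · rcases (jpt_eq_iff p' p).1 hp' with h | h
          · exact Or.inl (h ▸ h1)
          · exact Or.inr h.2
        · have hth : JPt Z p = JPt Z p₁ := by
            rw [hp₁]
            exact hqq
          rcases (jpt_eq_iff _ _).1 hth with h | h
          · exact Or.inr (h.symm ▸ hp₁2)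
          · exact Or.inr h.1
      · intro h
        by_cases h2 : p.val.2 = 1
        · exact Or.inr (hq_of_one p h2)
        · rcases h with h | h
          · exact Or.inl ⟨p, rfl, h, h2⟩
          · exact absurd h h2
    have hclosed : IsClosed (Wd ∪ {q}) := by
      rw [← isQuotientMap_quot_mk.isClosed_preimage, hpre2]
      apply IsClosed.union
      · exact IsClosed.preimage
          (continuous_subtype_val.comp (continuous_fst.comp continuous_subtype_val))
          isClosed_singleton
      · exact IsClosed.preimage (continuous_snd.comp continuous_subtype_val) isClosed_singleton
    refine ⟨hne, ?_⟩
    rw [connectedComponentIn_eq_image hne]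
    have hcl : IsClopen (Subtype.val ⁻¹' Wd : Set ({q}ᶜ : Set (JSp Z))) := by
      constructor
      · have heq2 : (Subtype.val ⁻¹' Wd : Set ({q}ᶜ : Set (JSp Z)))
            = Subtype.val ⁻¹' (Wd ∪ {q}) := by
          ext u
          simp only [Set.mem_preimage, Set.mem_union]
          constructor
          · exact Or.inl
          · rintro (h | h)
            · exact h
            · exact absurd h u.2
        rw [heq2]
        exact hclosed.preimage continuous_subtype_val
      · exact hopen.preimage continuous_subtype_val
    have hsub := hcl.connectedComponent_subset
      (x := (⟨_, hne⟩ : ({q}ᶜ : Set (JSp Z)))) hptd_mem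
    exact (Set.image_mono hsub).trans (Set.image_preimage_subset _ _)
  have hinj : Set.InjOn f D := by
    intro d hd d' hd' hfd
    rw [hf] at hfd
    simp only at hfd
    rw [dif_pos (hDZ hd), dif_pos (hDZ hd')] at hfd
    have hmem' := mem_connectedComponentIn ((main d' hd').1)
    rw [← hfd] at hmem'
    obtain ⟨p, hp, h1, h2⟩ := (main d hd).2 hmem'
    rcases (jpt_eq_iff _ _).1 hp with h | h
    · have hv : ((p.val.1 : ↥Z) : X × (ℕ → ℝ)) = d' :=
        congrArg (fun r : FPts (↥Z) (JB Z) => ((r.val.1 : ↥Z) : X × (ℕ → ℝ))) h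
      exact h1.symm.trans hv
    · exact absurd h.2 unit_zero_ne_one
  have hmaps : Set.MapsTo f D (connectedComponentIn ({q}ᶜ : Set (JSp Z)) '' ({q}ᶜ : Set (JSp Z))) := by
    intro d hd
    rw [hf]
    simp only
    rw [dif_pos (hDZ hd)]
    exact ⟨_, (main d hd).1, rfl⟩
  exact Set.infinite_of_injOn_mapsTo hinj hmaps hDinf

end Stmt15Aux

namespace Stmt15Aux

set_option linter.unusedSectionVars false
set_option maxHeartbeats 1000000

variable {X : Type} [MetricSpace X] {Z : Set (X × (ℕ → ℝ))}

lemma part2 (hXnc : ∀ x : X, IsPreconnected ({x}ᶜ : Set X))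
    (hXc : IsPreconnected (Set.univ : Set X)) (hb : baseW X ⊆ Z)
    {x₁ : X} (hx₁ : embW x₁ ∈ closure (Z \ baseW X))
    (q : JSp Z) (hq : ¬ ∃ p : FPts (↥Z) (JB Z), JPt Z p = q ∧ p.val.2 = 1) :
    ∃ C1 C2 : Set (JSp Z), ∀ x ∈ ({q}ᶜ : Set (JSp Z)),
      connectedComponentIn ({q}ᶜ : Set (JSp Z)) x = C1 ∨
      connectedComponentIn ({q}ᶜ : Set (JSp Z)) x = C2 := by
  classical
  obtain ⟨p₀, hp₀⟩ := Quot.exists_rep q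
  rcases p₀ with ⟨⟨w₀, t⟩, hp0⟩
  have hq₀ : JPt Z ⟨(w₀, t), hp0⟩ = q := hp₀
  have hp₀1 : t ≠ 1 := fun h => hq ⟨⟨(w₀, t), hp0⟩, hq₀, h⟩
  have hp₀1' : (⟨(w₀, t), hp0⟩ : FPts (↥Z) (JB Z)).val.2 ≠ 1 := hp₀1
  have ht1 : (t : ℝ) < 1 := lt_of_le_of_ne t.2.2 (fun h => hp₀1 (Subtype.ext h))
  have hw₁Z : embW x₁ ∈ Z := hb (embW_mem_base x₁)
  have hw₁J : (⟨embW x₁, hw₁Z⟩ : ↥Z) ∈ JB Z := hx₁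
  have hIco : Set.Ico (0:ℝ) (t:ℝ) ⊆ Set.Icc 0 1 := fun r hr => ⟨hr.1, hr.2.le.trans t.2.2⟩
  have hIoc : Set.Ioc (t:ℝ) 1 ⊆ Set.Icc 0 1 := fun r hr => ⟨t.2.1.trans hr.1.le, hr.2⟩
  have hq_pt : ∀ hp : ((t:unitInterval) = 0 ∨ w₀ ∈ JB Z), JPt Z ⟨(w₀, t), hp⟩ = q :=
    fun hp => (congrArg (JPt Z) (Subtype.ext rfl)).trans hq₀
  -- the apex-side blob
  set A0 : Set (JSp Z) := ⋃₀ {s | ∃ w : ↥Z, ∃ hw : w ∈ JB Z,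
      (w ≠ w₀ ∧ s = wmap Z w hw '' Set.Icc 0 1) ∨
      (w = w₀ ∧ s = wmap Z w hw '' Set.Ioc (t : ℝ) 1)} with hA0def
  have hA0pc : IsPreconnected A0 := by
    apply isPreconnected_sUnion (apexPt Z ⟨embW x₁, hw₁Z⟩ hw₁J)
    · rintro s ⟨w, hw, (⟨-, rfl⟩ | ⟨-, rfl⟩)⟩
      · exact apexPt_mem_wmap w _ hw hw₁J (by norm_num)
      · exact apexPt_mem_wmap w _ hw hw₁J ⟨ht1, le_refl 1⟩
    · rintro s ⟨w, hw, (⟨-, rfl⟩ | ⟨-, rfl⟩)⟩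
      · exact wmap_image_preconn w hw isPreconnected_Icc
      · exact wmap_image_preconn w hw isPreconnected_Ioc
  have hA0q : A0 ⊆ ({q}ᶜ : Set (JSp Z)) := by
    rintro y ⟨s, ⟨w, hw, hcase⟩, hys⟩ hyq
    have hyq' : y = q := hyq
    rcases hcase with ⟨hne, rfl⟩ | ⟨heq, rfl⟩ <;> rcases hys with ⟨r, hr, rfl⟩
    · have hh := wmap_eq_jpt w hw hr hp₀1' (hyq'.trans hq₀.symm)
      exact hne hh.1
    · have hh := wmap_eq_jpt w hw (hIoc hr) hp₀1' (hyq'.trans hq₀.symm)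
      exact (ne_of_gt hr.1) hh.2
  have hmemA0_full : ∀ (w : ↥Z) (hw : w ∈ JB Z), w ≠ w₀ → ∀ (s : unitInterval)
      (hp : s = 0 ∨ w ∈ JB Z), JPt Z ⟨(w, s), hp⟩ ∈ A0 := by
    intro w hw hne s hp
    exact ⟨wmap Z w hw '' Set.Icc 0 1, ⟨w, hw, Or.inl ⟨hne, rfl⟩⟩,
      mem_wmap_image w hw (le_refl _) s.2 hp⟩
  have hmemA0_up : ∀ (hw : w₀ ∈ JB Z) (s : unitInterval), (t:ℝ) < (s:ℝ) → ∀
      (hp : s = 0 ∨ w₀ ∈ JB Z), JPt Z ⟨(w₀, s), hp⟩ ∈ A0 := by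
    intro hw s hs hp
    exact ⟨wmap Z w₀ hw '' Set.Ioc (t:ℝ) 1, ⟨w₀, hw, Or.inr ⟨rfl, rfl⟩⟩,
      mem_wmap_image w₀ hw hIoc ⟨hs, s.2.2⟩ hp⟩
  have hBfull_pc : IsPreconnected (bmap Z hb '' Set.univ) :=
    hXc.image _ (continuous_bmap hb).continuousOn
  have hbase_pt : ∀ (w : ↥Z) (hbw : (w : X × (ℕ → ℝ)) ∈ baseW X)
      (hp : (0:unitInterval) = 0 ∨ w ∈ JB Z),
      JPt Z ⟨(w, 0), hp⟩ = bmap Z hb ((w : X × (ℕ → ℝ)).1) := by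
    intro w hbw hp
    unfold bmap
    exact congrArg (JPt Z)
      (Subtype.ext (Prod.ext_iff.mpr ⟨Subtype.ext (Prod.ext_iff.mpr ⟨rfl, hbw⟩), rfl⟩))
  have hptform : ∀ y : JSp Z, ∃ (w : ↥Z) (s : unitInterval) (hp : s = 0 ∨ w ∈ JB Z),
      y = JPt Z ⟨(w, s), hp⟩ := by
    intro y
    obtain ⟨⟨⟨w, s⟩, hp⟩, hy⟩ := Quot.exists_rep y
    exact ⟨w, s, hp, hy.symm⟩
  have hnotJB_base : ∀ w : ↥Z, w ∉ JB Z → (w : X × (ℕ → ℝ)) ∈ baseW X := by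
    intro w hw
    by_contra hnb
    exact hw (subset_closure ⟨w.2, hnb⟩)
  by_cases ht0 : t = 0
  · -- CASE t = 0
    have ht0' : (t : ℝ) = 0 := congrArg Subtype.val ht0
    by_cases hbw₀ : (w₀ : X × (ℕ → ℝ)) ∈ baseW X
    · -- w₀ lies over the base copy of X
      set x : X := (w₀ : X × (ℕ → ℝ)).1 with hxdef
      have hx : (w₀ : X × (ℕ → ℝ)) = embW x := Prod.ext_iff.mpr ⟨rfl, hbw₀⟩
      set Bp : Set (JSp Z) := bmap Z hb '' {x}ᶜ with hBpdef
      have hBp_pc : IsPreconnected Bp := (hXnc x).image _ (continuous_bmap hb).continuousOn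
      have hBpq : Bp ⊆ ({q}ᶜ : Set (JSp Z)) := by
        rintro y ⟨x', hx', rfl⟩ hmem
        have hmem' : bmap Z hb x' = q := hmem
        have hh := bmap_eq_jpt hb hp₀1' (hmem'.trans hq₀.symm)
        exact hx' (embW_injective ((hx.symm.trans hh.1)).symm)
      -- the cover
      have hcov : ({q}ᶜ : Set (JSp Z)) ⊆ A0 ∪ Bp := by
        intro y hy
        obtain ⟨w, s, hp, rfl⟩ := hptform y
        by_cases hwJ : w ∈ JB Z
        · by_cases hww : w = w₀
          · subst hww
            have hst : s ≠ t := by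
              intro h
              subst h
              exact hy (hq_pt hp)
            have hs0 : s ≠ 0 := fun h => hst (h.trans ht0.symm)
            have hlt : (t:ℝ) < (s:ℝ) := by
              rw [ht0']
              exact lt_of_le_of_ne s.2.1 (fun hh => hs0 (Subtype.ext hh.symm))
            exact Or.inl (hmemA0_up hwJ s hlt hp)
          · exact Or.inl (hmemA0_full w hwJ hww s hp)
        · have hbw := hnotJB_base w hwJ
          have hs0 : s = 0 := hp.resolve_right hwJ
          subst hs0
          by_cases hxw : (w : X × (ℕ → ℝ)).1 = x
          · exfalso
            have hweq : w = w₀ := by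
              apply Subtype.ext
              rw [hx, ← hxw]
              exact Prod.ext_iff.mpr ⟨rfl, hbw⟩
            have hyq2 : JPt Z ⟨(w, (0:unitInterval)), hp⟩ = JPt Z ⟨(w₀, t), hp0⟩ :=
              congrArg (JPt Z) (Subtype.ext (Prod.ext_iff.mpr ⟨hweq, ht0.symm⟩))
            exact hy (hyq2.trans hq₀)
          · right
            rw [hbase_pt w hbw hp]
            exact ⟨(w : X × (ℕ → ℝ)).1, hxw, rfl⟩
      by_cases hatt : ∃ x₀ : X, x₀ ≠ x ∧ embW x₀ ∈ closure (Z \ baseW X)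
      · obtain ⟨x₀, hx₀ne, hx₀cl⟩ := hatt
        have hz₀ : embW x₀ ∈ Z := hb (embW_mem_base x₀)
        have hw₂J : (⟨embW x₀, hz₀⟩ : ↥Z) ∈ JB Z := hx₀cl
        have hw₂ne : (⟨embW x₀, hz₀⟩ : ↥Z) ≠ w₀ := by
          intro h
          exact hx₀ne (embW_injective ((congrArg Subtype.val h).trans hx))
        have hcA0 : bmap Z hb x₀ ∈ A0 := by
          have heq : JPt Z ⟨((⟨embW x₀, hz₀⟩ : ↥Z), (0:unitInterval)), Or.inl rfl⟩
              = bmap Z hb x₀ :=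
            hbase_pt ⟨embW x₀, hz₀⟩ (embW_mem_base x₀) (Or.inl rfl)
          rw [← heq]
          exact hmemA0_full _ hw₂J hw₂ne 0 (Or.inl rfl)
        have hcBp : bmap Z hb x₀ ∈ Bp := ⟨x₀, hx₀ne, rfl⟩
        have hApc : IsPreconnected (A0 ∪ Bp) :=
          IsPreconnected.union (bmap Z hb x₀) hcA0 hcBp hA0pc hBp_pc
        exact two_components hApc isPreconnected_empty
          (Set.union_subset hA0q hBpq) (Set.empty_subset _)
          (fun y hy => Or.inl (hcov hy))
      · exact two_components hA0pc hBp_pc hA0q hBpq hcov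
    · -- w₀ not over the base
      have hw₀J : w₀ ∈ JB Z := subset_closure ⟨w₀.2, hbw₀⟩
      have hw₁ne : (⟨embW x₁, hw₁Z⟩ : ↥Z) ≠ w₀ := by
        intro h
        apply hbw₀
        rw [← congrArg Subtype.val h]
        exact embW_mem_base x₁
      have hBfullq : bmap Z hb '' Set.univ ⊆ ({q}ᶜ : Set (JSp Z)) := by
        rintro y ⟨x', -, rfl⟩ hmem
        have hmem' : bmap Z hb x' = q := hmem
        have hh := bmap_eq_jpt hb hp₀1' (hmem'.trans hq₀.symm)
        apply hbw₀
        rw [hh.1]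
        exact embW_mem_base x'
      have hcA0 : bmap Z hb x₁ ∈ A0 := by
        have heq : JPt Z ⟨((⟨embW x₁, hw₁Z⟩ : ↥Z), (0:unitInterval)), Or.inl rfl⟩
            = bmap Z hb x₁ :=
          hbase_pt ⟨embW x₁, hw₁Z⟩ (embW_mem_base x₁) (Or.inl rfl)
        rw [← heq]
        exact hmemA0_full _ hw₁J hw₁ne 0 (Or.inl rfl)
      have hApc : IsPreconnected (A0 ∪ bmap Z hb '' Set.univ) :=
        IsPreconnected.union (bmap Z hb x₁) hcA0 ⟨x₁, trivial, rfl⟩ hA0pc hBfull_pc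
      have hcov : ({q}ᶜ : Set (JSp Z)) ⊆ A0 ∪ bmap Z hb '' Set.univ := by
        intro y hy
        obtain ⟨w, s, hp, rfl⟩ := hptform y
        by_cases hwJ : w ∈ JB Z
        · by_cases hww : w = w₀
          · subst hww
            have hst : s ≠ t := by
              intro h
              subst h
              exact hy (hq_pt hp)
            have hs0 : s ≠ 0 := fun h => hst (h.trans ht0.symm)
            have hlt : (t:ℝ) < (s:ℝ) := by
              rw [ht0']
              exact lt_of_le_of_ne s.2.1 (fun hh => hs0 (Subtype.ext hh.symm))
            exact Or.inl (hmemA0_up hwJ s hlt hp)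
          · exact Or.inl (hmemA0_full w hwJ hww s hp)
        · have hbw := hnotJB_base w hwJ
          have hs0 : s = 0 := hp.resolve_right hwJ
          subst hs0
          right
          rw [hbase_pt w hbw hp]
          exact ⟨(w : X × (ℕ → ℝ)).1, trivial, rfl⟩
      exact two_components hApc isPreconnected_empty
        (Set.union_subset hA0q hBfullq) (Set.empty_subset _)
        (fun y hy => Or.inl (hcov hy))
  · -- CASE t ≠ 0
    have hw₀J : w₀ ∈ JB Z := hp0.resolve_left ht0
    have htpos : (0:ℝ) < (t:ℝ) := lt_of_le_of_ne t.2.1 (fun h => ht0 (Subtype.ext h.symm))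
    set L : Set (JSp Z) := wmap Z w₀ hw₀J '' Set.Ico 0 (t:ℝ) with hLdef
    have hLpc : IsPreconnected L := wmap_image_preconn w₀ hw₀J isPreconnected_Ico
    have hLq : L ⊆ ({q}ᶜ : Set (JSp Z)) := by
      rintro y ⟨r, hr, rfl⟩ hmem
      have hmem' : wmap Z w₀ hw₀J r = q := hmem
      have hh := wmap_eq_jpt w₀ hw₀J (hIco hr) hp₀1' (hmem'.trans hq₀.symm)
      exact (ne_of_lt hr.2) hh.2
    have hmemL : ∀ (s : unitInterval), (s:ℝ) < (t:ℝ) → ∀ (hp : s = 0 ∨ w₀ ∈ JB Z),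
        JPt Z ⟨(w₀, s), hp⟩ ∈ L :=
      fun s hs hp => mem_wmap_image w₀ hw₀J hIco ⟨s.2.1, hs⟩ hp
    -- cover helper for the w ∈ JB side
    have hcovJ : ∀ (w : ↥Z) (s : unitInterval) (hp : s = 0 ∨ w ∈ JB Z),
        w ∈ JB Z → JPt Z ⟨(w, s), hp⟩ ∈ ({q}ᶜ : Set (JSp Z)) →
        JPt Z ⟨(w, s), hp⟩ ∈ A0 ∪ L := by
      intro w s hp hwJ hy
      by_cases hww : w = w₀
      · subst hww
        rcases lt_trichotomy (s:ℝ) (t:ℝ) with hlt | heq | hgt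
        · exact Or.inr (hmemL s hlt hp)
        · exfalso
          have : s = t := Subtype.ext heq
          subst this
          exact hy (hq_pt hp)
        · exact Or.inl (hmemA0_up hwJ s hgt hp)
      · exact Or.inl (hmemA0_full w hwJ hww s hp)
    by_cases hbw₀ : (w₀ : X × (ℕ → ℝ)) ∈ baseW X
    · -- base-attached puncture at positive height
      set x : X := (w₀ : X × (ℕ → ℝ)).1 with hxdef
      have hx : (w₀ : X × (ℕ → ℝ)) = embW x := Prod.ext_iff.mpr ⟨rfl, hbw₀⟩
      have hBfullq : bmap Z hb '' Set.univ ⊆ ({q}ᶜ : Set (JSp Z)) := by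
        rintro y ⟨x', -, rfl⟩ hmem
        have hmem' : bmap Z hb x' = q := hmem
        have hh := bmap_eq_jpt hb hp₀1' (hmem'.trans hq₀.symm)
        exact (ne_of_gt htpos) hh.2
      have hcL : bmap Z hb x ∈ L := by
        have heq : JPt Z ⟨(w₀, (0:unitInterval)), Or.inl rfl⟩ = bmap Z hb x :=
          hbase_pt w₀ hbw₀ (Or.inl rfl)
        rw [← heq]
        exact hmemL 0 (by exact htpos) (Or.inl rfl)
      have hBpc : IsPreconnected (bmap Z hb '' Set.univ ∪ L) :=
        IsPreconnected.union (bmap Z hb x) ⟨x, trivial, rfl⟩ hcL hBfull_pc hLpc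
      have hBq : bmap Z hb '' Set.univ ∪ L ⊆ ({q}ᶜ : Set (JSp Z)) :=
        Set.union_subset hBfullq hLq
      have hcov : ({q}ᶜ : Set (JSp Z)) ⊆ A0 ∪ (bmap Z hb '' Set.univ ∪ L) := by
        intro y hy
        obtain ⟨w, s, hp, rfl⟩ := hptform y
        by_cases hwJ : w ∈ JB Z
        · rcases hcovJ w s hp hwJ hy with h | h
          · exact Or.inl h
          · exact Or.inr (Or.inr h)
        · have hbw := hnotJB_base w hwJ
          have hs0 : s = 0 := hp.resolve_right hwJ
          subst hs0
          refine Or.inr (Or.inl ?_)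
          rw [hbase_pt w hbw hp]
          exact ⟨(w : X × (ℕ → ℝ)).1, trivial, rfl⟩
      by_cases hatt : ∃ x₀ : X, x₀ ≠ x ∧ embW x₀ ∈ closure (Z \ baseW X)
      · obtain ⟨x₀, hx₀ne, hx₀cl⟩ := hatt
        have hz₀ : embW x₀ ∈ Z := hb (embW_mem_base x₀)
        have hw₂J : (⟨embW x₀, hz₀⟩ : ↥Z) ∈ JB Z := hx₀cl
        have hw₂ne : (⟨embW x₀, hz₀⟩ : ↥Z) ≠ w₀ := by
          intro h
          exact hx₀ne (embW_injective ((congrArg Subtype.val h).trans hx))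
        have hcA0 : bmap Z hb x₀ ∈ A0 := by
          have heq : JPt Z ⟨((⟨embW x₀, hz₀⟩ : ↥Z), (0:unitInterval)), Or.inl rfl⟩
              = bmap Z hb x₀ :=
            hbase_pt ⟨embW x₀, hz₀⟩ (embW_mem_base x₀) (Or.inl rfl)
          rw [← heq]
          exact hmemA0_full _ hw₂J hw₂ne 0 (Or.inl rfl)
        have hApc : IsPreconnected (A0 ∪ (bmap Z hb '' Set.univ ∪ L)) :=
          IsPreconnected.union (bmap Z hb x₀) hcA0 (Or.inl ⟨x₀, trivial, rfl⟩) hA0pc hBpc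
        exact two_components hApc isPreconnected_empty
          (Set.union_subset hA0q hBq) (Set.empty_subset _)
          (fun y hy => Or.inl (hcov hy))
      · exact two_components hA0pc hBpc hA0q hBq hcov
    · -- w₀ not over the base, positive height
      have hw₁ne : (⟨embW x₁, hw₁Z⟩ : ↥Z) ≠ w₀ := by
        intro h
        apply hbw₀
        rw [← congrArg Subtype.val h]
        exact embW_mem_base x₁
      have hBfullq : bmap Z hb '' Set.univ ⊆ ({q}ᶜ : Set (JSp Z)) := by
        rintro y ⟨x', -, rfl⟩ hmem
        have hmem' : bmap Z hb x' = q := hmem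
        have hh := bmap_eq_jpt hb hp₀1' (hmem'.trans hq₀.symm)
        apply hbw₀
        rw [hh.1]
        exact embW_mem_base x'
      have hcA0 : bmap Z hb x₁ ∈ A0 := by
        have heq : JPt Z ⟨((⟨embW x₁, hw₁Z⟩ : ↥Z), (0:unitInterval)), Or.inl rfl⟩
            = bmap Z hb x₁ :=
          hbase_pt ⟨embW x₁, hw₁Z⟩ (embW_mem_base x₁) (Or.inl rfl)
        rw [← heq]
        exact hmemA0_full _ hw₁J hw₁ne 0 (Or.inl rfl)
      have hApc : IsPreconnected (A0 ∪ bmap Z hb '' Set.univ) :=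
        IsPreconnected.union (bmap Z hb x₁) hcA0 ⟨x₁, trivial, rfl⟩ hA0pc hBfull_pc
      have hcov : ({q}ᶜ : Set (JSp Z)) ⊆ (A0 ∪ bmap Z hb '' Set.univ) ∪ L := by
        intro y hy
        obtain ⟨w, s, hp, rfl⟩ := hptform y
        by_cases hwJ : w ∈ JB Z
        · rcases hcovJ w s hp hwJ hy with h | h
          · exact Or.inl (Or.inl h)
          · exact Or.inr h
        · have hbw := hnotJB_base w hwJ
          have hs0 : s = 0 := hp.resolve_right hwJ
          subst hs0
          refine Or.inl (Or.inr ?_)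
          rw [hbase_pt w hbw hp]
          exact ⟨(w : X × (ℕ → ℝ)).1, trivial, rfl⟩
      exact two_components hApc hLpc (Set.union_subset hA0q hBfullq) hLq hcov

end Stmt15Aux


theorem stmt15 {X : Type} [MetricSpace X] [CompactSpace X] [ConnectedSpace X]
    (hXnc : ∀ x : X, IsPreconnected ({x}ᶜ : Set X))
    {k : ℕ} (S : Fin (k + 1) → Set X)
    (hScl : ∀ i, IsClosed (S i)) (hSmono : Monotone S) (hSne : S (Fin.last k) ≠ ∅)
    (Z : Set (X × (ℕ → ℝ))) (hZ : IsIModel (List.ofFn S) Z) :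
    (∀ q : JSp Z, (∃ p : FPts (↥Z) (JB Z), JPt Z p = q ∧ p.val.2 = 1) →
       Set.Infinite (connectedComponentIn ({q}ᶜ : Set (JSp Z)) '' ({q}ᶜ : Set (JSp Z)))) ∧
    (∀ q : JSp Z, ¬ (∃ p : FPts (↥Z) (JB Z), JPt Z p = q ∧ p.val.2 = 1) →
       ∃ C1 C2 : Set (JSp Z), ∀ x ∈ ({q}ᶜ : Set (JSp Z)),
         connectedComponentIn ({q}ᶜ : Set (JSp Z)) x = C1 ∨
         connectedComponentIn ({q}ᶜ : Set (JSp Z)) x = C2) ∧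
    (∀ q : JSp Z,
       Set.Infinite (connectedComponentIn ({q}ᶜ : Set (JSp Z)) '' ({q}ᶜ : Set (JSp Z))) ↔
       (∃ p : FPts (↥Z) (JB Z), JPt Z p = q ∧ p.val.2 = 1)) := by
  classical
  have hbaseZ : baseW X ⊆ Z := Stmt15Aux.tower_subset _ _ _ _ hZ
  have hconcat : IsITowerFrom 0 (baseW X)
      ((List.ofFn fun i => S i.castSucc) ++ [S (Fin.last k)]) Z := by
    have hofn := List.ofFn_succ' S
    rw [List.concat_eq_append] at hofn
    rw [← hofn]
    exact hZ
  obtain ⟨Zp, jj, hstep⟩ := Stmt15Aux.tower_concat _ _ _ _ _ hconcat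
  obtain ⟨D, hZeq, hDne, hform, hiso, hclD, -⟩ := hstep
  have hDZ : D ⊆ Z := by
    rw [hZeq]
    exact Set.subset_union_right
  have hDnb : D ⊆ Z \ baseW X := by
    intro p hp
    obtain ⟨z, hz, tt, htt, rfl⟩ := hform p hp
    exact ⟨hDZ hp, Stmt15Aux.addC_not_base htt.1 z⟩
  obtain ⟨x₁, hx₁S⟩ := Set.nonempty_iff_ne_empty.mpr hSne
  have hx₁mem : embW x₁ ∈ closure D \ D := by
    rw [hclD]
    exact Or.inr ⟨x₁, hx₁S, rfl⟩
  have hSkcl : embW x₁ ∈ closure (Z \ baseW X) := closure_mono hDnb hx₁mem.1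
  have hDinf : D.Infinite := by
    intro hfin
    have hcl : closure D = D := hfin.isClosed.closure_eq
    rw [hcl] at hx₁mem
    exact hx₁mem.2 hx₁mem.1
  have P1 : ∀ q : JSp Z, (∃ p : FPts (↥Z) (JB Z), JPt Z p = q ∧ p.val.2 = 1) →
      Set.Infinite (connectedComponentIn ({q}ᶜ : Set (JSp Z)) '' ({q}ᶜ : Set (JSp Z))) :=
    fun q hq => Stmt15Aux.part1 hDZ hiso hDinf q hq
  have P2 : ∀ q : JSp Z, ¬ (∃ p : FPts (↥Z) (JB Z), JPt Z p = q ∧ p.val.2 = 1) →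
      ∃ C1 C2 : Set (JSp Z), ∀ x ∈ ({q}ᶜ : Set (JSp Z)),
        connectedComponentIn ({q}ᶜ : Set (JSp Z)) x = C1 ∨
        connectedComponentIn ({q}ᶜ : Set (JSp Z)) x = C2 :=
    fun q hq => Stmt15Aux.part2 hXnc isPreconnected_univ hbaseZ hSkcl q hq
  refine ⟨P1, P2, fun q => ⟨?_, P1 q⟩⟩
  intro hinf
  by_contra hq
  obtain ⟨C1, C2, hC⟩ := P2 q hq
  apply hinf
  apply Set.Finite.subset ((Set.finite_singleton C2).insert C1)
  rintro y ⟨x, hx, rfl⟩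
  rcases hC x hx with h | h
  · exact Set.mem_insert_iff.mpr (Or.inl h)
  · exact Set.mem_insert_iff.mpr (Or.inr h)
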